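/- Let m be a positive integer and let α ∈ F_{2^m} be such that the polynomial x³ + x + α has no root in F_{2^m}. Then α ≠ 0, the absolute trace satisfies Tr_m(1/α²) = Tr_m(1), and there exists β ∈ F_{2^m} such that β² + β + 1 = 1/α². -/

import Mathlib

/-- If x³ + x + α has no root in F_{2^m}, then α ≠ 0,
Tr_m(1/α²) = Tr_m(1), and there exists β with β² + β + 1 = 1/α². -/
theorem stmt_9 (m : ℕ) (hm : 0 < m)
    (K : Type*) [Field K] [Fintype K] [CharP K 2] (hcard : Fintype.card K = 2 ^ m)
    (α : K) (hα : ∀ x : K, x ^ 3 + x + α ≠ 0)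
    (tr : K → K) (htr : ∀ x : K, tr x = ∑ i ∈ Finset.range m, x ^ 2 ^ i) :
    α ≠ 0 ∧ tr (1 / α ^ 2) = tr 1 ∧ ∃ β : K, β ^ 2 + β + 1 = 1 / α ^ 2 := by
  classical
  haveI : Fact (Nat.Prime 2) := ⟨Nat.prime_two⟩
  have h2 : (2 : K) = 0 := by exact_mod_cast CharP.cast_eq_zero K 2
  have hadd : ∀ x : K, x + x = 0 := fun x => CharTwo.add_self_eq_zero x
  have addz : ∀ a b : K, a + b = 0 → a = b := fun a b h => by
    linear_combination h - b * h2
  have hα0 : α ≠ 0 := fun h => hα 0 (by simp [h])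
  -- squaring is injective and surjective
  have sqinj : ∀ a b : K, a ^ 2 = b ^ 2 → a = b := by
    intro a b hab
    have h : (a + b) ^ 2 = 0 := by rw [CharTwo.add_sq, hab, hadd]
    exact addz a b (pow_eq_zero_iff (n := 2) (by norm_num) |>.mp h)
  have sqsurj : Function.Surjective (fun a : K => a ^ 2) :=
    Finite.injective_iff_surjective.mp (fun a b h => sqinj a b h)
  -- main existence result
  have hβ : ∃ β : K, β ^ 2 + β + 1 = 1 / α ^ 2 := by
    by_contra hc
    push_neg at hc
    set P : K → Prop := fun a => a ≠ 0 ∧ ∀ β : K, β ^ 2 + β ≠ 1 / a + 1 with hP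
    -- α satisfies P
    have hPα : P α := by
      refine ⟨hα0, fun β hb => ?_⟩
      apply hc (β ^ 2)
      have key : (β ^ 2) ^ 2 + β ^ 2 = (β ^ 2 + β) ^ 2 := (CharTwo.add_sq _ _).symm
      rw [key, hb, CharTwo.add_sq, div_pow, one_pow]
      linear_combination h2
    -- members of P are ≠ 1
    have hne1 : ∀ a : K, P a → a ≠ 1 := by
      intro a ha h1
      apply ha.2 0
      rw [h1]
      linear_combination -h2
    -- P is closed under a ↦ a^3 + a
    have hclosed : ∀ x : K, P x → P (x ^ 3 + x) := by
      intro x hx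
      have hx0 : x ≠ 0 := hx.1
      have hx1 : x + 1 ≠ 0 := by
        intro h
        exact hne1 x hx (addz x 1 h)
      have hfac : x ^ 3 + x = x * (x + 1) ^ 2 := by
        linear_combination (-(x ^ 2)) * h2
      have ha0 : x ^ 3 + x ≠ 0 := by
        rw [hfac]
        exact mul_ne_zero hx0 (pow_ne_zero 2 hx1)
      refine ⟨ha0, fun β hb => ?_⟩
      set δ : K := 1 / (x + 1) with hδdef
      -- partial fractions: 1/(x^3+x) = 1/x + δ + δ^2
      have hpf : 1 / (x ^ 3 + x) = 1 / x + δ + δ ^ 2 := by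
        rw [hfac, eq_comm, hδdef]
        rw [eq_div_iff (mul_ne_zero hx0 (pow_ne_zero 2 hx1))]
        have e1 : (1 / x) * (x * (x + 1) ^ 2) = (x + 1) ^ 2 := by
          field_simp
        have e2 : (1 / (x + 1)) * (x * (x + 1) ^ 2) = x * (x + 1) := by
          field_simp
        have e3 : ((1 / (x + 1)) ^ 2) * (x * (x + 1) ^ 2) = x := by
          rw [div_pow, one_pow]; field_simp
        linear_combination e1 + e2 + e3 + (x ^ 2 + 2 * x) * h2
      apply hx.2 (β + δ)
      rw [CharTwo.add_sq]
      rw [hpf] at hb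
      linear_combination hb + (δ + δ ^ 2) * h2
    -- injectivity of a ↦ a^3 + a on P
    have hinj : ∀ x y : K, P x → P y → x ^ 3 + x = y ^ 3 + y → x = y := by
      intro x y hx hy hxy
      by_contra hne
      have hdiff : (x + y) * (x ^ 2 + x * y + y ^ 2 + 1) = 0 := by
        linear_combination hxy + (y ^ 3 + y + x ^ 2 * y + x * y ^ 2) * h2
      have hxy0 : x + y ≠ 0 := fun h => hne (addz x y h)
      have hquad : x ^ 2 + x * y + y ^ 2 + 1 = 0 :=
        (mul_eq_zero.mp hdiff).resolve_left hxy0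
      have hx0 : x ≠ 0 := hx.1
      have hkey : y ^ 2 + x * y = x ^ 2 + 1 := by
        linear_combination hquad + (-x ^ 2 - 1) * h2
      obtain ⟨δ, hδ0⟩ := sqsurj (y / x)
      have hδ : δ ^ 2 = y / x := hδ0
      have e4 : (x * (δ ^ 2 + δ)) ^ 2 = (x * (1 / x + 1)) ^ 2 := by
        have h5 : x * (1 / x + 1) = 1 + x := by field_simp
        rw [h5, mul_pow, CharTwo.add_sq, hδ]
        rw [div_pow]
        field_simp
        linear_combination hkey - x * h2
      have e5 : x * (δ ^ 2 + δ) = x * (1 / x + 1) := sqinj _ _ e4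
      exact hx.2 δ (mul_left_cancel₀ hx0 e5)
    -- pigeonhole: the self-map is surjective on the finset of P
    set S : Finset K := Finset.univ.filter P with hS
    have hmem : ∀ a : K, a ∈ S ↔ P a := by
      intro a; simp [hS]
    have hsurj := Finset.surj_on_of_inj_on_of_card_le
      (s := S) (t := S) (fun a _ => a ^ 3 + a)
      (fun a ha => (hmem _).mpr (hclosed a ((hmem _).mp ha)))
      (fun a b ha hb h => hinj a b ((hmem _).mp ha) ((hmem _).mp hb) h)
      le_rfl
    obtain ⟨x, hxS, hxα⟩ := hsurj α ((hmem _).mpr hPα)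
    have hxα' : α = x ^ 3 + x := hxα
    exact hα x (by rw [hxα']; linear_combination (x ^ 3 + x) * h2)
  -- conclude
  obtain ⟨β, hβeq⟩ := hβ
  refine ⟨hα0, ?_, β, hβeq⟩
  rw [← hβeq, htr, htr]
  have hq : β ^ 2 ^ m = β := by rw [← hcard]; exact FiniteField.pow_card β
  have expand : ∀ i : ℕ, (β ^ 2 + β + 1) ^ 2 ^ i
      = (β ^ 2) ^ 2 ^ i + β ^ 2 ^ i + 1 := by
    intro i
    rw [add_pow_char_pow, add_pow_char_pow, one_pow]
  have hsum : ∑ i ∈ Finset.range m, (β ^ 2 + β + 1) ^ 2 ^ i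
      = (∑ i ∈ Finset.range m, (β ^ 2) ^ 2 ^ i)
        + (∑ i ∈ Finset.range m, β ^ 2 ^ i)
        + (∑ i ∈ Finset.range m, (1 : K)) := by
    rw [← Finset.sum_add_distrib, ← Finset.sum_add_distrib]
    exact Finset.sum_congr rfl fun i _ => expand i
  have hshift : ∑ i ∈ Finset.range m, (β ^ 2) ^ 2 ^ i
      = ∑ i ∈ Finset.range m, β ^ 2 ^ i := by
    have key : ∑ i ∈ Finset.range m, ((β ^ 2 ^ (i + 1)) - β ^ 2 ^ i)
        = β ^ 2 ^ m - β ^ 2 ^ 0 := Finset.sum_range_sub (fun i => β ^ 2 ^ i) m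
    rw [hq] at key
    simp only [pow_zero, pow_one] at key
    have heq : ∑ i ∈ Finset.range m, (β ^ 2) ^ 2 ^ i
        = ∑ i ∈ Finset.range m, β ^ 2 ^ (i + 1) := by
      refine Finset.sum_congr rfl fun i _ => ?_
      rw [← pow_mul, pow_succ, mul_comm 2 (2 ^ i), pow_mul]
    rw [heq, ← sub_eq_zero, ← Finset.sum_sub_distrib, key, sub_self]
  rw [hsum, hshift, hadd, zero_add]
  simp
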